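/- Let s be a string and d its difference string, d(i) = s(i+1) - s(i). If the LZ77 parse (without overlaps) of s has z phrases, then the LZ77 parse (without overlaps) of d has at most 2z phrases. -/

import Mathlib

variable {α : Type*} [DecidableEq α]

/-- The length of the next greedy LZ77 phrase without overlaps: the largest
`L` such that the length-`L` prefix of the remainder `t` occurs as a substring
of the already-parsed prefix `p` (`0` if there is none). -/
def lzNoLen (p t : List α) : ℕ :=
  Nat.findGreatest (fun L => 0 < L ∧ (t.take L) <:+: p) t.length

/-- Greedy LZ77 without overlaps: `p` is the already parsed prefix, `r` the
remainder. Each phrase is the longest nonempty prefix of `r` occurring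
entirely earlier, or else a single fresh symbol. -/
def lzNoAux (p r : List α) : List (List α) :=
  match r with
  | [] => []
  | a :: r' =>
    if hL : lzNoLen p (a :: r') = 0 then [a] :: lzNoAux (p ++ [a]) r'
    else ((a :: r').take (lzNoLen p (a :: r'))) ::
      lzNoAux (p ++ (a :: r').take (lzNoLen p (a :: r'))) ((a :: r').drop (lzNoLen p (a :: r')))
termination_by r.length
decreasing_by
  · simp
  · have := Nat.pos_of_ne_zero hL
    simp only [List.length_drop, List.length_cons]
    omega

/-- The greedy LZ77 parse without overlaps. -/
def lzNo (s : List α) : List (List α) := lzNoAux [] s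

/-- The length of the next greedy LZ77 phrase with overlaps: the largest `L`
such that the length-`L` prefix of the remainder `t` can be copied from a
source occurrence starting strictly before position `|p|` (possibly
overlapping the phrase itself). -/
def lzOvLen (p t : List α) : ℕ :=
  Nat.findGreatest
    (fun L => 0 < L ∧ ∃ j < p.length, ((p ++ t.take L).drop j).take L = t.take L)
    t.length

/-- Greedy LZ77 with overlaps between phrases and their sources. -/
def lzOvAux (p r : List α) : List (List α) :=
  match r with
  | [] => []
  | a :: r' =>
    if hL : lzOvLen p (a :: r') = 0 then [a] :: lzOvAux (p ++ [a]) r'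
    else ((a :: r').take (lzOvLen p (a :: r'))) ::
      lzOvAux (p ++ (a :: r').take (lzOvLen p (a :: r'))) ((a :: r').drop (lzOvLen p (a :: r')))
termination_by r.length
decreasing_by
  · simp
  · have := Nat.pos_of_ne_zero hL
    simp only [List.length_drop, List.length_cons]
    omega

/-- The greedy LZ77 parse with overlaps. -/
def lzOv (s : List α) : List (List α) := lzOvAux [] s



lemma lzNoLen_le (p t : List α) : lzNoLen p t ≤ t.length := Nat.findGreatest_le _

lemma lzNoLen_spec {p t : List α} (h : lzNoLen p t ≠ 0) :
    0 < lzNoLen p t ∧ t.take (lzNoLen p t) <:+: p :=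
  (Nat.findGreatest_eq_iff.mp (rfl : lzNoLen p t = _)).2.1 h

lemma le_lzNoLen {p t : List α} {m : ℕ} (hm : m ≤ t.length) (h0 : 0 < m)
    (h : t.take m <:+: p) : m ≤ lzNoLen p t :=
  Nat.le_findGreatest hm ⟨h0, h⟩

lemma lzNoAux_cons (p : List α) (a : α) (r' : List α) :
    lzNoAux p (a :: r') =
      (a :: r').take (max (lzNoLen p (a :: r')) 1) ::
        lzNoAux (p ++ (a :: r').take (max (lzNoLen p (a :: r')) 1))
          ((a :: r').drop (max (lzNoLen p (a :: r')) 1)) := by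
  rw [lzNoAux]
  by_cases hL : lzNoLen p (a :: r') = 0
  · simp [hL]
  · have : max (lzNoLen p (a :: r')) 1 = lzNoLen p (a :: r') :=
      max_eq_left (Nat.pos_of_ne_zero hL)
    simp [hL, this]

/-- A valid LZ77-style parse (no overlaps) of the remainder, given parsed prefix `p`. -/
def ValidAux (p : List α) : List (List α) → Prop
  | [] => True
  | f :: F => f ≠ [] ∧ (f.length = 1 ∨ f <:+: p) ∧ ValidAux (p ++ f) F

lemma flatten_lzNoAux (p r : List α) : (lzNoAux p r).flatten = r := by
  induction p, r using lzNoAux.induct with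
  | case1 p => simp [lzNoAux]
  | case2 p a r' hL ih =>
      rw [lzNoAux]; simp [hL, ih]
  | case3 p a r' hL ih =>
      rw [lzNoAux]; simp only [hL, dite_false, List.flatten_cons, ih,
        List.take_append_drop, dif_neg hL]

lemma valid_lzNoAux (p r : List α) : ValidAux p (lzNoAux p r) := by
  induction p, r using lzNoAux.induct with
  | case1 p => simp [lzNoAux, ValidAux]
  | case2 p a r' hL ih =>
      rw [lzNoAux]; simp only [hL, dif_pos]
      exact ⟨by simp, Or.inl rfl, ih⟩
  | case3 p a r' hL ih =>
      rw [lzNoAux]; simp only [dif_neg hL]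
      have hs := lzNoLen_spec hL
      refine ⟨?_, Or.inr hs.2, ih⟩
      have := hs.1
      simp [List.take_eq_nil_iff]
      omega

/-- Endpoint of the next greedy phrase when parsing `s` from position `k`. -/
def nextPos (s : List α) (k : ℕ) : ℕ :=
  k + max (lzNoLen (s.take k) (s.drop k)) 1

lemma lt_nextPos (s : List α) (k : ℕ) : k < nextPos s k := by
  have : 1 ≤ max (lzNoLen (s.take k) (s.drop k)) 1 := le_max_right _ _
  unfold nextPos; omega

lemma nextPos_le (s : List α) {k : ℕ} (hk : k < s.length) : nextPos s k ≤ s.length := by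
  have h := lzNoLen_le (s.take k) (s.drop k)
  simp only [List.length_drop] at h
  simp only [nextPos]
  rcases Nat.eq_zero_or_pos (lzNoLen (s.take k) (s.drop k)) with h0 | h0
  · simp [h0]; omega
  · rw [max_eq_left h0]; omega

lemma lzNoAux_step (s : List α) {k : ℕ} (hk : k < s.length) :
    lzNoAux (s.take k) (s.drop k) =
      (s.drop k).take (nextPos s k - k) ::
        lzNoAux (s.take (nextPos s k)) (s.drop (nextPos s k)) := by
  obtain ⟨a, r', hr⟩ : ∃ a r', s.drop k = a :: r' := by
    cases h : s.drop k with
    | nil => exfalso; have := List.length_drop (i := k) (l := s); rw [h] at this; simp at this; omega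
    | cons a r' => exact ⟨a, r', rfl⟩
  have hL : nextPos s k - k = max (lzNoLen (s.take k) (s.drop k)) 1 := by
    simp [nextPos]
  have e1 : s.take (nextPos s k) = s.take k ++ (s.drop k).take (max (lzNoLen (s.take k) (s.drop k)) 1) := by
    rw [show nextPos s k = k + max (lzNoLen (s.take k) (s.drop k)) 1 from rfl, List.take_add]
  have e2 : s.drop (nextPos s k) = (s.drop k).drop (max (lzNoLen (s.take k) (s.drop k)) 1) := by
    rw [List.drop_drop, show nextPos s k = k + max (lzNoLen (s.take k) (s.drop k)) 1 from rfl]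
  rw [hL, e1, e2, hr, lzNoAux_cons]

lemma nextPos_mono (s : List α) {k k' : ℕ} (hkk : k ≤ k') (hk' : k' ≤ s.length) :
    nextPos s k ≤ nextPos s k' := by
  by_cases hle : nextPos s k ≤ k' + 1
  · exact le_trans hle (lt_nextPos s k')
  · push_neg at hle
    set L := lzNoLen (s.take k) (s.drop k) with hLdef
    have hL1 : 1 ≤ L := by
      by_contra h
      have : L = 0 := by omega
      have : nextPos s k = k + 1 := by unfold nextPos; rw [← hLdef, this]; simp
      omega
    have hmax : max L 1 = L := max_eq_left hL1
    have hnk : nextPos s k = k + L := by unfold nextPos; rw [← hLdef, hmax]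
    have hkL : k' + 1 < k + L := by omega
    have hP : 0 < L ∧ (s.drop k).take L <:+: s.take k :=
      lzNoLen_spec (by omega)
    have hLle : L ≤ s.length - k := by
      have := lzNoLen_le (s.take k) (s.drop k)
      simpa using this
    set L' := k + L - k' with hL'def
    have hL'pos : 0 < L' := by omega
    -- the shifted prefix is still a copy from inside `s.take k'`
    have htarget : (s.drop k').take L' = ((s.drop k).take L).drop (k' - k) := by
      rw [List.drop_take]
      have h1 : s.drop k' = (s.drop k).drop (k' - k) := by
        rw [List.drop_drop]; congr 1; omega
      rw [h1]
      congr 1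
      omega
    have hinf : (s.drop k').take L' <:+: s.take k' := by
      rw [htarget]
      refine ((List.drop_suffix _ _).isInfix.trans hP.2).trans ?_
      exact (List.IsPrefix.isInfix (by
        have : s.take k = (s.take k').take k := by
          rw [List.take_take, min_eq_left hkk]
        rw [this]; exact List.take_prefix _ _))
    have hlen : L' ≤ (s.drop k').length := by
      simp only [List.length_drop]; omega
    have : L' ≤ lzNoLen (s.take k') (s.drop k') := le_lzNoLen hlen hL'pos hinf
    have : nextPos s k' ≥ k' + L' := by
      unfold nextPos
      have : max (lzNoLen (s.take k') (s.drop k')) 1 ≥ L' := le_max_of_le_left this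
      omega
    omega

/-- Number of remaining greedy phrases when parsing `s` from position `k`. -/
def cnt (s : List α) (k : ℕ) : ℕ := (lzNoAux (s.take k) (s.drop k)).length

lemma cnt_of_ge {s : List α} {k : ℕ} (h : s.length ≤ k) : cnt s k = 0 := by
  unfold cnt
  rw [List.drop_eq_nil_of_le h, lzNoAux]
  rfl

lemma cnt_step {s : List α} {k : ℕ} (hk : k < s.length) :
    cnt s k = 1 + cnt s (nextPos s k) := by
  unfold cnt
  rw [lzNoAux_step s hk]
  simp [Nat.add_comm]

lemma cnt_antitone (s : List α) : ∀ k k' : ℕ, k ≤ k' → k' ≤ s.length →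
    cnt s k' ≤ cnt s k := by
  intro k k' hkk hk'
  by_cases hlt : k' < s.length
  · have hk : k < s.length := lt_of_le_of_lt hkk hlt
    rw [cnt_step hk, cnt_step hlt]
    have hrec := cnt_antitone s (nextPos s k) (nextPos s k')
      (nextPos_mono s hkk hk') (nextPos_le s hlt)
    omega
  · have : s.length ≤ k' := by omega
    rw [cnt_of_ge this]
    omega
termination_by k k' => s.length - k'
decreasing_by
  have := lt_nextPos s k'
  omega

/-- Greedy optimality: any valid parse of the remainder has at least as many
phrases as the greedy parse. -/
lemma cnt_le_valid (s : List α) : ∀ (F : List (List α)) (k : ℕ),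
    k ≤ s.length → ValidAux (s.take k) F → F.flatten = s.drop k →
    cnt s k ≤ F.length := by
  intro F
  induction F with
  | nil =>
      intro k hk _ hflat
      have : s.length ≤ k := by
        have := congrArg List.length hflat
        simp at this
        omega
      rw [cnt_of_ge this]
      simp
  | cons f F ih =>
      intro k hk hvalid hflat
      obtain ⟨hfne, hfval, hvalid'⟩ := hvalid
      set m := f.length with hm
      have hm1 : 1 ≤ m := by
        cases f with
        | nil => exact absurd rfl hfne
        | cons x xs => simp [hm]
      have hflat' : f ++ F.flatten = s.drop k := by simpa using hflat
      have hkm : k + m ≤ s.length := by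
        have := congrArg List.length hflat'
        simp at this
        omega
      have hfeq : (s.drop k).take m = f := by
        have := congrArg (List.take m) hflat'
        simpa [List.take_append_of_le_length (le_refl m), hm] using this.symm
      have hF : F.flatten = s.drop (k + m) := by
        have := congrArg (List.drop m) hflat'
        rw [List.drop_append_of_le_length (le_refl m)] at this
        simpa [hm, List.drop_drop, Nat.add_comm] using this
      have hnext : k + m ≤ nextPos s k := by
        rcases hfval with h1 | h2
        · have : m = 1 := h1
          have := lt_nextPos s k
          omega
        · have : m ≤ lzNoLen (s.take k) (s.drop k) := by
            apply le_lzNoLen _ (by omega)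
            · rw [hfeq]; exact h2
            · simp; omega
          unfold nextPos
          have := this.trans (le_max_left (lzNoLen (s.take k) (s.drop k)) 1)
          omega
      have hkn : k < s.length := by omega
      have htake : s.take (k + m) = s.take k ++ f := by
        rw [List.take_add, hfeq]
      have ihh := ih (k + m) hkm (by rw [htake]; exact hvalid') hF
      rw [cnt_step hkn]
      have h2 := cnt_antitone s (nextPos s k) (k+m) |>.mt
      have hmono : cnt s (nextPos s k) ≤ cnt s (k + m) :=
        cnt_antitone s (k + m) (nextPos s k) hnext (nextPos_le s hkn)
      simp only [List.length_cons]
      omega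

lemma ValidAux_append {I : List (List α)} : ∀ {p : List α} {D : List (List α)},
    ValidAux p I → ValidAux (p ++ I.flatten) D → ValidAux p (I ++ D) := by
  induction I with
  | nil => intro p D _ hD; simpa using hD
  | cons f I ih =>
      intro p D hI hD
      obtain ⟨h1, h2, h3⟩ := hI
      exact ⟨h1, h2, ih h3 (by simpa [List.append_assoc] using hD)⟩

lemma drop_take_infix_take (l : List α) {j c k : ℕ} (h : j + c ≤ k) :
    (l.drop j).take c <:+: l.take k := by
  have h1 : (l.drop j).take c <:+ l.take (j + c) := by
    rw [List.take_add]; exact List.suffix_append _ _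
  have h2 : l.take (j + c) <+: l.take k := by
    have : l.take (j + c) = (l.take k).take (j + c) := by
      rw [List.take_take, min_eq_left h]
    rw [this]; exact List.take_prefix _ _
  exact h1.isInfix.trans h2.isInfix

/-- The difference string. -/
def diffL (s : List ℤ) : List ℤ := List.zipWith (fun a b => b - a) s s.tail

lemma zipWith_take_succ {β γ δ : Type*} (f : β → γ → δ) :
    ∀ (u : List β) (v : List γ) (b : ℕ),
      List.zipWith f (u.take (b+1)) (v.take b) = List.zipWith f (u.take b) (v.take b) := by
  intro u
  induction u with
  | nil => intro v b; simp
  | cons x u ih =>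
      intro v b
      cases v with
      | nil => simp
      | cons y v =>
          cases b with
          | zero => simp
          | succ b => simp [ih]

lemma diffL_drop (u : List ℤ) (a : ℕ) : (diffL u).drop a = diffL (u.drop a) := by
  unfold diffL
  rw [List.drop_zipWith]
  congr 1
  rw [List.tail_drop]
  cases u with
  | nil => simp
  | cons x u => simp [List.drop_drop, Nat.add_comm]

lemma diffL_take (u : List ℤ) (b : ℕ) : (diffL u).take b = diffL (u.take (b+1)) := by
  unfold diffL
  rw [List.take_zipWith]
  have htail : (u.take (b+1)).tail = u.tail.take b := by
    cases u with
    | nil => simp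
    | cons x u => simp
  rw [htail, zipWith_take_succ]

lemma diffL_seg (u : List ℤ) (a b : ℕ) :
    ((diffL u).drop a).take b = diffL ((u.drop a).take (b+1)) := by
  rw [diffL_drop, diffL_take]

lemma diffL_length (u : List ℤ) : (diffL u).length = u.length - 1 := by
  unfold diffL
  cases u <;> simp

/-- From a valid parse of `s` construct a valid parse of its difference string
with at most twice as many phrases. -/
lemma construct (s : List ℤ) : ∀ (F : List (List ℤ)) (k : ℕ),
    k ≤ s.length → ValidAux (s.take k) F → F.flatten = s.drop k →
    ∃ D : List (List ℤ), ValidAux ((diffL s).take k) D ∧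
      D.flatten = (diffL s).drop k ∧ D.length ≤ 2 * F.length := by
  intro F
  induction F with
  | nil =>
      intro k hk _ hflat
      have hlen : s.length ≤ k := by
        have := congrArg List.length hflat
        simp at this
        omega
      refine ⟨[], trivial, ?_, by simp⟩
      rw [List.drop_eq_nil_of_le (by rw [diffL_length]; omega)]
      rfl
  | cons f F ih =>
      intro k hk hvalid hflat
      obtain ⟨hfne, hfval, hvalid'⟩ := hvalid
      set d := diffL s with hd
      set m := f.length with hm
      have hm1 : 1 ≤ m := by
        cases f with
        | nil => exact absurd rfl hfne
        | cons x xs => simp [hm]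
      have hflat' : f ++ F.flatten = s.drop k := by simpa using hflat
      have hkm : k + m ≤ s.length := by
        have := congrArg List.length hflat'
        simp at this
        omega
      have hfeq : (s.drop k).take m = f := by
        have := congrArg (List.take m) hflat'
        simpa [List.take_append_of_le_length (le_refl m), hm] using this.symm
      have hF : F.flatten = s.drop (k + m) := by
        have := congrArg (List.drop m) hflat'
        rw [List.drop_append_of_le_length (le_refl m)] at this
        simpa [hm, List.drop_drop, Nat.add_comm] using this
      have htake : s.take (k + m) = s.take k ++ f := by
        rw [List.take_add, hfeq]
      obtain ⟨D', hD'valid, hD'flat, hD'len⟩ :=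
        ih (k + m) hkm (by rw [htake]; exact hvalid') hF
      have ddlen : d.length = s.length - 1 := diffL_length s
      -- the two candidate phrases for `d`
      set interior : List ℤ := (d.drop k).take (m - 1) with hint
      set bd : List ℤ := (d.drop (k + (m - 1))).take 1 with hbd
      have hIjoin : interior ++ bd = (d.drop k).take m := by
        rw [hint, hbd, ← List.drop_drop]
        rw [show m = (m - 1) + 1 by omega, List.take_add]
        simp
      have hintlen : interior.length = m - 1 := by
        rw [hint]
        simp only [List.length_take, List.length_drop]
        omega
      have hbdlen : bd.length ≤ 1 := by
        rw [hbd]; simp [List.length_take]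
      -- interior is a copy from earlier, when m ≥ 2
      have hintinf : 2 ≤ m → interior <:+: d.take k := by
        intro hm2
        have hinf : f <:+: s.take k := by
          rcases hfval with h1 | h2
          · omega
          · exact h2
        obtain ⟨u, v, huv⟩ := hinf
        set j := u.length with hj
        have hjm : j + m + v.length = k := by
          have := congrArg List.length huv
          simp [hm, hj] at this
          omega
        have hfocc : (s.drop j).take m = f := by
          have h1 : (s.take k).drop j = f ++ v := by
            rw [← huv, List.append_assoc,
              List.drop_append_of_le_length (le_of_eq hj), hj, List.drop_length]
            simp
          have h2 : (s.take k).drop j = (s.drop j).take (k - j) := List.drop_take (i := j) (j := k) (l := s)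
          have h3 : (s.drop j).take (k - j) = f ++ v := by rw [← h2, h1]
          have := congrArg (List.take m) h3
          rw [List.take_take, min_eq_left (by omega),
            List.take_append_of_le_length (le_refl m)] at this
          simpa [hm] using this
        have hcopy : interior = (d.drop j).take (m - 1) := by
          rw [hint, hd, diffL_seg, diffL_seg]
          rw [show m - 1 + 1 = m by omega]
          rw [hfeq, hfocc]
        rw [hcopy]
        exact drop_take_infix_take d (by omega)
      have hm2or : 2 ≤ m ∨ m = 1 := by omega
      -- assemble the at-most-two new phrases
      set I : List (List ℤ) :=
        (if 2 ≤ m then [interior] else []) ++ (if bd = [] then [] else [bd]) with hI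
      have hIflat : I.flatten = interior ++ bd := by
        rw [hI]
        rcases hm2or with hm2 | hm1'
        · by_cases hbde : bd = [] <;> simp [hm2, hbde]
        · have hie : interior = [] := by rw [hint, hm1']; simp
          by_cases hbde : bd = [] <;> simp [hm1', hbde, hie]
      have hIvalid : ValidAux (d.take k) I := by
        have hbd1 : bd ≠ [] → bd.length = 1 := by
          intro h
          have := List.length_pos_iff.mpr h
          omega
        rcases hm2or with hm2 | hm1'
        · have hne : interior ≠ [] := by
            intro h
            rw [h] at hintlen
            simp at hintlen
            omega
          have hinf := hintinf hm2
          by_cases hbde : bd = []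
          · have hIeq : I = [interior] := by rw [hI]; simp [hm2, hbde]
            rw [hIeq]
            exact ⟨hne, Or.inr hinf, trivial⟩
          · have hIeq : I = [interior, bd] := by rw [hI]; simp [hm2, hbde]
            rw [hIeq]
            exact ⟨hne, Or.inr hinf, hbde, Or.inl (hbd1 hbde), trivial⟩
        · by_cases hbde : bd = []
          · have hIeq : I = [] := by rw [hI]; simp [hm1', hbde]
            rw [hIeq]
            trivial
          · have hIeq : I = [bd] := by rw [hI]; simp [hm1', hbde]
            rw [hIeq]
            exact ⟨hbde, Or.inl (hbd1 hbde), trivial⟩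
      have hIlen : I.length ≤ 2 := by
        rw [hI]; split_ifs <;> simp
      refine ⟨I ++ D', ?_, ?_, ?_⟩
      · have hpre : d.take k ++ I.flatten = d.take (k + m) := by
          rw [hIflat, hIjoin, ← List.take_add]
        exact ValidAux_append hIvalid (by rw [hpre]; exact hD'valid)
      · have hdd : d.drop (k + m) = (d.drop k).drop m := by rw [List.drop_drop]
        rw [List.flatten_append, hIflat, hIjoin, hD'flat, hdd, List.take_append_drop]
      · simp only [List.length_append, List.length_cons]
        omega

/-- if the greedy LZ77 parse (without overlaps) of `s` has `z`
phrases, then the greedy LZ77 parse (without overlaps) of the difference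
string `d`, `d i = s (i+1) - s i`, has at most `2·z` phrases. -/
theorem lzNo_diff_le_two_mul (s : List ℤ) :
    (lzNo (List.zipWith (fun a b => b - a) s s.tail)).length ≤ 2 * (lzNo s).length := by
  show (lzNo (diffL s)).length ≤ 2 * (lzNo s).length
  have hvalid : ValidAux (s.take 0) (lzNo s) := valid_lzNoAux [] s
  have hflat : (lzNo s).flatten = s.drop 0 := flatten_lzNoAux [] s
  obtain ⟨D, hDv, hDf, hDl⟩ := construct s (lzNo s) 0 (Nat.zero_le _) hvalid hflat
  have h := cnt_le_valid (diffL s) D 0 (Nat.zero_le _) hDv hDf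
  have he : (lzNo (diffL s)).length = cnt (diffL s) 0 := rfl
  omega
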